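/- Let K ≥ 1 be an integer, j ≥ 0 an integer, and c, b real numbers. Then I_{C₀}(K,j;c,b) = I_{C₂}(K,j;c,b) − I_{C₁}(K,j;c,b); explicitly, K^{−j} ∫_0^K t^j exp(2πi c t + 2πi b t²) dt = K^{−j} e^{iπ(j+1)/4} ∫_0^{√2 K} t^j exp(2πi c e^{iπ/4} t − 2π b t²) dt − i K^{−j} ∫_0^K (K + it)^j exp(2πi c (K + it) + 2πi b (K + it)²) dt. -/

import Mathlib

open Complex MeasureTheory Metric Set intervalIntegral

noncomputable def myPrim (f : ℂ → ℂ) (z : ℂ) : ℂ := ∫ s in (0:ℝ)..1, z * f (↑s * z)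

lemma hasDerivAt_myPrim {f f' : ℂ → ℂ} (hd : ∀ z, HasDerivAt f (f' z) z)
    (hc : Continuous f') (z₀ : ℂ) : HasDerivAt (myPrim f) (f z₀) z₀ := by
  have hdf : Differentiable ℂ f := fun z => (hd z).differentiableAt
  have hfc : Continuous f := hdf.continuous
  obtain ⟨C1, hC1⟩ := (isCompact_closedBall (0:ℂ) (‖z₀‖+1)).exists_bound_of_continuousOn
    hfc.continuousOn
  obtain ⟨C2, hC2⟩ := (isCompact_closedBall (0:ℂ) (‖z₀‖+1)).exists_bound_of_continuousOn
    hc.continuousOn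
  have hC2' : 0 ≤ C2 :=
    le_trans (norm_nonneg _) (hC2 0 (mem_closedBall_self (by positivity)))
  set G' : ℂ → ℝ → ℂ := fun x s => 1 * f (↑s * x) + x * (f' (↑s * x) * ↑s) with hG'
  have key := intervalIntegral.hasDerivAt_integral_of_dominated_loc_of_deriv_le
    (μ := volume) (F := fun x s => x * f (↑s * x)) (F' := G') (x₀ := z₀) (a := 0) (b := 1)
    (bound := fun _ => C1 + (‖z₀‖+1) * C2) (s := ball z₀ 1) (ball_mem_nhds z₀ one_pos) ?_ ?_ ?_ ?_ ?_ ?_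
  · -- use key
    have hFTC : (∫ s in (0:ℝ)..1, G' z₀ s) = f z₀ := by
      have hder : ∀ s ∈ uIcc (0:ℝ) 1,
          HasDerivAt (fun s : ℝ => (↑s:ℂ) * f (↑s * z₀)) (G' z₀ s) s := by
        intro s _
        have hin : HasDerivAt (fun w : ℂ => f (w * z₀)) (f' (↑s*z₀) * z₀) ↑s :=
          (hd _).comp _ (by simpa using (hasDerivAt_id ((s:ℝ):ℂ)).mul_const z₀)
        have hmul : HasDerivAt (fun w : ℂ => w * f (w * z₀)) _ ((s:ℝ):ℂ) :=
          (hasDerivAt_id ((s:ℝ):ℂ)).mul hin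
        have := hmul.comp_ofReal
        convert this using 1
        simp only [hG', id]
        ring
      have hcont : IntervalIntegrable (G' z₀) volume 0 1 := by
        apply Continuous.intervalIntegrable
        fun_prop
      have := intervalIntegral.integral_eq_sub_of_hasDerivAt hder hcont
      simpa using this
    have := key.2
    rw [hFTC] at this
    exact this
  · exact Filter.Eventually.of_forall fun x => by
      apply Continuous.aestronglyMeasurable
      fun_prop
  · apply Continuous.intervalIntegrable
    fun_prop
  · apply Continuous.aestronglyMeasurable
    simp only [hG']
    fun_prop
  · refine Filter.Eventually.of_forall fun s hs x hx => ?_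
    have hs' : 0 < s ∧ s ≤ 1 := by
      rcases hs with hs
      simpa [Set.uIoc_of_le (zero_le_one (α := ℝ))] using hs
    have hxn : ‖x‖ ≤ ‖z₀‖ + 1 := by
      have h := mem_ball_iff_norm.mp hx
      have h2 := norm_sub_norm_le x z₀
      linarith
    have hsx : ‖(↑s:ℂ) * x‖ ≤ ‖z₀‖ + 1 := by
      rw [norm_mul, Complex.norm_real]
      have : |s| ≤ 1 := abs_le.mpr ⟨by linarith [hs'.1], hs'.2⟩
      have hxnn : (0:ℝ) ≤ ‖x‖ := norm_nonneg _
      calc ‖s‖ * ‖x‖ ≤ 1 * ‖x‖ := by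
            apply mul_le_mul_of_nonneg_right _ hxnn
            simpa [Real.norm_eq_abs] using this
        _ = ‖x‖ := one_mul _
        _ ≤ ‖z₀‖ + 1 := hxn
    have h1 : ‖f (↑s * x)‖ ≤ C1 := hC1 _ (by simpa [mem_closedBall, dist_zero_right] using hsx)
    have h2 : ‖f' (↑s * x)‖ ≤ C2 := hC2 _ (by simpa [mem_closedBall, dist_zero_right] using hsx)
    have habs : |s| ≤ 1 := abs_le.mpr ⟨by linarith [hs'.1], hs'.2⟩
    calc ‖G' x s‖ ≤ ‖1 * f (↑s*x)‖ + ‖x * (f' (↑s*x) * ↑s)‖ := norm_add_le _ _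
      _ = ‖f (↑s*x)‖ + ‖x‖ * (‖f' (↑s*x)‖ * |s|) := by
          simp [norm_mul, Complex.norm_real, Real.norm_eq_abs]
      _ ≤ C1 + (‖z₀‖+1) * C2 := by
          have hb : ‖f' (↑s*x)‖ * |s| ≤ C2 := by
            calc ‖f' (↑s*x)‖ * |s| ≤ C2 * 1 :=
              mul_le_mul h2 habs (abs_nonneg _) hC2'
              _ = C2 := mul_one _
          have := mul_le_mul hxn hb (by positivity) (by positivity)
          linarith
  · exact intervalIntegrable_const
  · refine Filter.Eventually.of_forall fun s hs x hx => ?_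
    have h0 : HasDerivAt (fun y : ℂ => ((s:ℝ):ℂ) * y) ((s:ℝ):ℂ) x := by
      simpa using (hasDerivAt_id x).const_mul ((s:ℝ):ℂ)
    have hin' := HasDerivAt.comp x (hd (((s:ℝ):ℂ) * x)) h0
    have hin : HasDerivAt (fun x : ℂ => f (↑s * x)) (f' (↑s * x) * ↑s) x := hin'
    have hm : HasDerivAt (fun x : ℂ => x * f (↑s * x)) _ x := (hasDerivAt_id x).mul hin
    simpa [hG'] using hm

lemma myPrim_seg {f f' : ℂ → ℂ} (hd : ∀ z, HasDerivAt f (f' z) z) (hc : Continuous f')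
    (a v : ℂ) (L : ℝ) :
    ∫ t in (0:ℝ)..L, f (a + ↑t * v) * v = myPrim f (a + ↑L * v) - myPrim f a := by
  have hdf : Differentiable ℂ f := fun z => (hd z).differentiableAt
  have hfc : Continuous f := hdf.continuous
  have hder : ∀ t ∈ uIcc (0:ℝ) L,
      HasDerivAt (fun t : ℝ => myPrim f (a + ↑t * v)) (f (a + ↑t * v) * v) t := by
    intro t _
    have h1 : HasDerivAt (fun w : ℂ => a + w * v) v ((t:ℝ):ℂ) := by
      simpa using ((hasDerivAt_id ((t:ℝ):ℂ)).mul_const v).const_add a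
    have h2 : HasDerivAt (fun w : ℂ => myPrim f (a + w * v)) (f (a + ↑t*v) * v) ((t:ℝ):ℂ) :=
      (hasDerivAt_myPrim hd hc _).comp _ h1
    exact h2.comp_ofReal
  have hint : IntervalIntegrable (fun t : ℝ => f (a + ↑t * v) * v) volume 0 L := by
    apply Continuous.intervalIntegrable
    fun_prop
  simpa using intervalIntegral.integral_eq_sub_of_hasDerivAt hder hint
open Complex MeasureTheory Metric Set intervalIntegral in
noncomputable def myF (j : ℕ) (c b : ℝ) (z : ℂ) : ℂ :=
  z ^ j * Complex.exp (2 * (Real.pi : ℂ) * Complex.I * (c : ℂ) * z +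
    2 * (Real.pi : ℂ) * Complex.I * (b : ℂ) * z ^ 2)

noncomputable def myF' (j : ℕ) (c b : ℝ) (z : ℂ) : ℂ :=
  (j : ℂ) * z ^ (j - 1) * Complex.exp (2 * (Real.pi : ℂ) * Complex.I * (c : ℂ) * z +
      2 * (Real.pi : ℂ) * Complex.I * (b : ℂ) * z ^ 2) +
    z ^ j * (Complex.exp (2 * (Real.pi : ℂ) * Complex.I * (c : ℂ) * z +
      2 * (Real.pi : ℂ) * Complex.I * (b : ℂ) * z ^ 2) *
      (2 * (Real.pi : ℂ) * Complex.I * (c : ℂ) + 2 * (Real.pi : ℂ) * Complex.I * (b : ℂ) * (2 * z)))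

lemma myF_hasDeriv (j : ℕ) (c b : ℝ) (z : ℂ) :
    HasDerivAt (myF j c b) (myF' j c b z) z := by
  have h1 : HasDerivAt (fun z : ℂ => 2 * (Real.pi : ℂ) * Complex.I * (c : ℂ) * z)
      (2 * (Real.pi : ℂ) * Complex.I * (c : ℂ)) z := by
    simpa using (hasDerivAt_id z).const_mul (2 * (Real.pi : ℂ) * Complex.I * (c : ℂ))
  have h2 : HasDerivAt (fun z : ℂ => 2 * (Real.pi : ℂ) * Complex.I * (b : ℂ) * z ^ 2)
      (2 * (Real.pi : ℂ) * Complex.I * (b : ℂ) * (2 * z)) z := by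
    have := (hasDerivAt_pow 2 z).const_mul (2 * (Real.pi : ℂ) * Complex.I * (b : ℂ))
    simpa using this
  exact (hasDerivAt_pow j z).mul ((h1.add h2).cexp)

lemma myF'_cont (j : ℕ) (c b : ℝ) : Continuous (myF' j c b) := by
  unfold myF'
  fun_prop

/-- Cauchy's theorem for `z^j exp(2πi c z + 2πi b z²)` on the triangle with
vertices `0, K, K+iK`: `I_{C₀}(K,j;c,b) = I_{C₂}(K,j;c,b) − I_{C₁}(K,j;c,b)`. -/
theorem IC0_eq_IC2_sub_IC1 (K : ℕ) (hK : 1 ≤ K) (j : ℕ) (c b : ℝ) :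
    ((K : ℂ) ^ j)⁻¹ * ∫ t in (0 : ℝ)..(K : ℝ), (t : ℂ) ^ j *
        Complex.exp (2 * (Real.pi : ℂ) * Complex.I * (c : ℂ) * (t : ℂ) +
          2 * (Real.pi : ℂ) * Complex.I * (b : ℂ) * (t : ℂ) ^ 2)
      = ((K : ℂ) ^ j)⁻¹ * Complex.exp (Complex.I * (Real.pi : ℂ) * ((j : ℂ) + 1) / 4) *
          (∫ t in (0 : ℝ)..(Real.sqrt 2 * K), (t : ℂ) ^ j *
            Complex.exp (2 * (Real.pi : ℂ) * Complex.I * (c : ℂ) *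
                Complex.exp (Complex.I * (Real.pi : ℂ) / 4) * (t : ℂ) -
              2 * (Real.pi : ℂ) * (b : ℂ) * (t : ℂ) ^ 2))
        - Complex.I * ((K : ℂ) ^ j)⁻¹ *
          ∫ t in (0 : ℝ)..(K : ℝ), ((K : ℂ) + Complex.I * (t : ℂ)) ^ j *
            Complex.exp (2 * (Real.pi : ℂ) * Complex.I * (c : ℂ) *
                ((K : ℂ) + Complex.I * (t : ℂ)) +
              2 * (Real.pi : ℂ) * Complex.I * (b : ℂ) *
                ((K : ℂ) + Complex.I * (t : ℂ)) ^ 2) := by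
  have hd : ∀ z, HasDerivAt (myF j c b) (myF' j c b z) z := myF_hasDeriv j c b
  have hc : Continuous (myF' j c b) := myF'_cont j c b
  set P : ℂ → ℂ := myPrim (myF j c b) with hPdef
  set v : ℂ := Complex.exp (Complex.I * (Real.pi : ℂ) / 4) with hvdef
  -- E1
  have E1 : (∫ t in (0 : ℝ)..(K : ℝ), (t : ℂ) ^ j *
        Complex.exp (2 * (Real.pi : ℂ) * Complex.I * (c : ℂ) * (t : ℂ) +
          2 * (Real.pi : ℂ) * Complex.I * (b : ℂ) * (t : ℂ) ^ 2))
      = P (K : ℂ) - P 0 := by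
    have h := myPrim_seg hd hc 0 1 (K : ℝ)
    simp only [myF, mul_one, zero_add, Complex.ofReal_natCast] at h
    exact h
  -- E2
  have E2 : Complex.I * (∫ t in (0 : ℝ)..(K : ℝ), ((K : ℂ) + Complex.I * (t : ℂ)) ^ j *
        Complex.exp (2 * (Real.pi : ℂ) * Complex.I * (c : ℂ) *
            ((K : ℂ) + Complex.I * (t : ℂ)) +
          2 * (Real.pi : ℂ) * Complex.I * (b : ℂ) *
            ((K : ℂ) + Complex.I * (t : ℂ)) ^ 2))
      = P ((K : ℂ) + Complex.I * (K : ℂ)) - P (K : ℂ) := by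
    have h := myPrim_seg hd hc (K : ℂ) Complex.I (K : ℝ)
    simp only [myF, Complex.ofReal_natCast] at h
    rw [show (K : ℂ) + (K : ℂ) * Complex.I = (K : ℂ) + Complex.I * (K : ℂ) by ring] at h
    rw [← h, ← intervalIntegral.integral_const_mul]
    apply intervalIntegral.integral_congr
    intro t _
    simp only
    rw [show 2 * (Real.pi : ℂ) * Complex.I * (c : ℂ) * ((K : ℂ) + (t : ℂ) * Complex.I) +
        2 * (Real.pi : ℂ) * Complex.I * (b : ℂ) * ((K : ℂ) + (t : ℂ) * Complex.I) ^ 2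
      = 2 * (Real.pi : ℂ) * Complex.I * (c : ℂ) * ((K : ℂ) + Complex.I * (t : ℂ)) +
        2 * (Real.pi : ℂ) * Complex.I * (b : ℂ) * ((K : ℂ) + Complex.I * (t : ℂ)) ^ 2 by ring,
      show ((K : ℂ) + (t : ℂ) * Complex.I) ^ j = ((K : ℂ) + Complex.I * (t : ℂ)) ^ j by ring]
    ring
  -- facts about v
  have hv : v = ((Real.sqrt 2 / 2 : ℝ) : ℂ) * (1 + Complex.I) := by
    rw [hvdef, show Complex.I * (Real.pi : ℂ) / 4 = ((Real.pi / 4 : ℝ) : ℂ) * Complex.I by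
      push_cast; ring, Complex.exp_mul_I, ← Complex.ofReal_cos, ← Complex.ofReal_sin,
      Real.cos_pi_div_four, Real.sin_pi_div_four]
    push_cast
    ring
  have h2 : ((Real.sqrt 2 : ℝ) : ℂ) ^ 2 = 2 := by
    norm_cast
    exact Real.sq_sqrt (by norm_num)
  have hend : ((Real.sqrt 2 * (K : ℝ) : ℝ) : ℂ) * v = (K : ℂ) + Complex.I * (K : ℂ) := by
    rw [hv]; push_cast
    linear_combination ((K : ℂ) * (1 + Complex.I) / 2) * h2
  have hv2 : v ^ 2 = Complex.I := by
    rw [hv]; push_cast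
    linear_combination (((1 : ℂ) + Complex.I) ^ 2 / 4) * h2 + (1 / 2 : ℂ) * Complex.I_sq
  have hvj : v ^ (j + 1) = Complex.exp (Complex.I * (Real.pi : ℂ) * ((j : ℂ) + 1) / 4) := by
    rw [hvdef, ← Complex.exp_nat_mul]
    congr 1
    push_cast
    ring
  -- E3
  have E3 : Complex.exp (Complex.I * (Real.pi : ℂ) * ((j : ℂ) + 1) / 4) *
        (∫ t in (0 : ℝ)..(Real.sqrt 2 * K), (t : ℂ) ^ j *
          Complex.exp (2 * (Real.pi : ℂ) * Complex.I * (c : ℂ) *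
              Complex.exp (Complex.I * (Real.pi : ℂ) / 4) * (t : ℂ) -
            2 * (Real.pi : ℂ) * (b : ℂ) * (t : ℂ) ^ 2))
      = P ((K : ℂ) + Complex.I * (K : ℂ)) - P 0 := by
    have h := myPrim_seg hd hc 0 v (Real.sqrt 2 * (K : ℝ))
    simp only [myF, zero_add] at h
    rw [hend] at h
    rw [← h, ← intervalIntegral.integral_const_mul]
    apply intervalIntegral.integral_congr
    intro t _
    simp only [← hvdef, ← hvj]
    rw [show 2 * (Real.pi : ℂ) * Complex.I * (c : ℂ) * ((t : ℂ) * v) +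
        2 * (Real.pi : ℂ) * Complex.I * (b : ℂ) * ((t : ℂ) * v) ^ 2
      = 2 * (Real.pi : ℂ) * Complex.I * (c : ℂ) * v * (t : ℂ) -
        2 * (Real.pi : ℂ) * (b : ℂ) * (t : ℂ) ^ 2 by
      linear_combination (2 * (Real.pi : ℂ) * Complex.I * (b : ℂ) * (t : ℂ) ^ 2) * hv2 +
        (2 * (Real.pi : ℂ) * (b : ℂ) * (t : ℂ) ^ 2) * Complex.I_sq]
    rw [mul_pow, pow_succ]
    ring
  linear_combination (((K : ℂ) ^ j)⁻¹) * E1 - (((K : ℂ) ^ j)⁻¹) * E3 + (((K : ℂ) ^ j)⁻¹) * E2
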